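/- Let 1 ≤ p ≤ 2 and 0 < α ≤ 1. Suppose that the α-snowflake of ℓ_p admits a bi-Lipschitz embedding into a Hilbert space, i.e. there exist a real Hilbert space H, a map T : ℓ_p → H, and constants A, B > 0 with A·‖x − y‖_p^α ≤ ‖T(x) − T(y)‖_H ≤ B·‖x − y‖_p^α for all x, y ∈ ℓ_p. Then α ≤ p/2. -/

import Mathlib

open Finset RealInnerProductSpace
open scoped symmDiff

variable {H : Type} [NormedAddCommGroup H] [InnerProductSpace ℝ H]

lemma quad_ineq (a b c d : H) :
    ‖a - c‖^2 + ‖b - d‖^2 ≤ ‖a - b‖^2 + ‖b - c‖^2 + ‖c - d‖^2 + ‖d - a‖^2 := by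
  have key : ‖a - b‖^2 + ‖b - c‖^2 + ‖c - d‖^2 + ‖d - a‖^2
      - (‖a - c‖^2 + ‖b - d‖^2) = ‖(a + c) - (b + d)‖^2 := by
    simp only [@norm_sub_sq_real, @norm_add_sq_real, inner_add_add_self, inner_add_left,
      inner_add_right]
    have h1 : (inner ℝ b a : ℝ) = (inner ℝ a b : ℝ) := real_inner_comm _ _
    have h2 : (inner ℝ c a : ℝ) = (inner ℝ a c : ℝ) := real_inner_comm _ _
    have h3 : (inner ℝ c b : ℝ) = (inner ℝ b c : ℝ) := real_inner_comm _ _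
    have h4 : (inner ℝ d a : ℝ) = (inner ℝ a d : ℝ) := real_inner_comm _ _
    have h5 : (inner ℝ d b : ℝ) = (inner ℝ b d : ℝ) := real_inner_comm _ _
    have h6 : (inner ℝ d c : ℝ) = (inner ℝ c d : ℝ) := real_inner_comm _ _
    ring_nf
    nlinarith [real_inner_self_eq_norm_sq a]
  nlinarith [sq_nonneg ‖(a + c) - (b + d)‖, key]

lemma symmDiff_insert_not_mem {t : Finset ℕ} {a : ℕ} (ha : a ∉ t) :
    t ∆ {a} = insert a t := by
  ext x; simp [Finset.mem_symmDiff]; by_cases hx : x = a <;> simp [hx] <;> tauto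

lemma insert_symmDiff_self {t : Finset ℕ} {a : ℕ} (ha : a ∉ t) :
    (insert a t) ∆ {a} = t := by
  ext x; simp [Finset.mem_symmDiff]; by_cases hx : x = a <;> simp [hx] <;> tauto

lemma insert_symmDiff_single {t : Finset ℕ} {a i : ℕ} (hia : i ≠ a) :
    (insert a t) ∆ {i} = insert a (t ∆ {i}) := by
  ext x
  by_cases hx : x = a <;>
    simp only [Finset.mem_symmDiff, Finset.mem_insert, Finset.mem_singleton, hx] <;> tauto

lemma symmDiff_sdiff_self {s t : Finset ℕ} (h : t ⊆ s) : t ∆ (s \ t) = s := by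
  ext x; simp only [Finset.mem_symmDiff, Finset.mem_sdiff]
  constructor
  · rintro (⟨h1, h2⟩ | ⟨h1, h2⟩)
    · exact h h1
    · exact h1.1
  · intro hx; by_cases ht : x ∈ t
    · left; exact ⟨ht, fun h' => h'.2 ht⟩
    · right; exact ⟨⟨hx, ht⟩, ht⟩

lemma insert_sdiff_subset' {s t : Finset ℕ} {a : ℕ} (ha : a ∉ s) (h : t ⊆ s) :
    insert a s \ t = insert a (s \ t) := by
  ext x; simp; by_cases hx : x = a
  · subst hx; simp; exact fun h' => ha (h h')
  · simp [hx]

lemma insert_sdiff_insert' {s t : Finset ℕ} {a : ℕ} (ha : a ∉ s) :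
    insert a s \ insert a t = s \ t := by
  ext x; simp; by_cases hx : x = a
  · subst hx; simp [ha]
  · simp [hx]

lemma sum_powerset_compl (s : Finset ℕ) (F : Finset ℕ → ℝ) :
    ∑ t ∈ s.powerset, F (s \ t) = ∑ t ∈ s.powerset, F t := by
  refine Finset.sum_nbij' (fun t => s \ t) (fun t => s \ t) ?_ ?_ ?_ ?_ ?_ <;>
    simp +contextual [Finset.mem_powerset, Finset.sdiff_sdiff_self_left,
      Finset.sdiff_subset, Finset.inter_eq_right]

lemma enflo_type_two (s : Finset ℕ) (f : Finset ℕ → H) :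
    ∑ t ∈ s.powerset, ‖f t - f (s \ t)‖^2 ≤
      ∑ i ∈ s, ∑ t ∈ s.powerset, ‖f t - f (t ∆ {i})‖^2 := by
  induction s using Finset.induction generalizing f with
  | empty => simp
  | @insert a s ha ih =>
    have hinj : ∀ x ∈ s.powerset, ∀ y ∈ s.powerset, insert a x = insert a y → x = y := by
      intro t1 h1 t2 h2 h12
      have ha1 : a ∉ t1 := fun h => ha ((Finset.mem_powerset.1 h1) h)
      have ha2 : a ∉ t2 := fun h => ha ((Finset.mem_powerset.1 h2) h)
      rw [← Finset.erase_insert ha1, ← Finset.erase_insert ha2, h12]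
    have hdisj : Disjoint s.powerset (s.powerset.image (insert a)) := by
      rw [Finset.disjoint_left]
      intro u hu hu'
      obtain ⟨t, _, rfl⟩ := Finset.mem_image.1 hu'
      exact ha (Finset.mem_powerset.1 hu (Finset.mem_insert_self a t))
    have hsplit : ∀ F : Finset ℕ → ℝ, ∑ t ∈ (insert a s).powerset, F t =
        ∑ t ∈ s.powerset, F t + ∑ t ∈ s.powerset, F (insert a t) := by
      intro F
      rw [Finset.powerset_insert, Finset.sum_union hdisj, Finset.sum_image hinj]
    have hat : ∀ t ∈ s.powerset, a ∉ t := fun t ht h => ha (Finset.mem_powerset.1 ht h)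
    have hts : ∀ t ∈ s.powerset, t ⊆ s := fun t ht => Finset.mem_powerset.1 ht
    set g : Finset ℕ → H := fun t => f (insert a t) with hg
    have hL : ∑ t ∈ (insert a s).powerset, ‖f t - f (insert a s \ t)‖^2
        = ∑ t ∈ s.powerset, ‖f t - f (insert a (s \ t))‖^2
          + ∑ t ∈ s.powerset, ‖g t - f (s \ t)‖^2 := by
      rw [hsplit]
      congr 1
      · exact Finset.sum_congr rfl fun t ht => by
          rw [insert_sdiff_subset' ha (hts t ht)]
      · exact Finset.sum_congr rfl fun t ht => by
          rw [insert_sdiff_insert' (t := t) ha]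
    have hstep : ∑ t ∈ s.powerset, ‖f t - f (insert a (s \ t))‖^2
          + ∑ t ∈ s.powerset, ‖g t - f (s \ t)‖^2
        ≤ ∑ t ∈ s.powerset, ‖f t - g t‖^2
          + ∑ t ∈ s.powerset, ‖g t - g (s \ t)‖^2
          + ∑ t ∈ s.powerset, ‖f (insert a (s \ t)) - f (s \ t)‖^2
          + ∑ t ∈ s.powerset, ‖f (s \ t) - f t‖^2 := by
      rw [← Finset.sum_add_distrib, ← Finset.sum_add_distrib, ← Finset.sum_add_distrib,
        ← Finset.sum_add_distrib]
      exact Finset.sum_le_sum fun t _ =>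
        quad_ineq (f t) (g t) (f (insert a (s \ t))) (f (s \ t))
    have hS3 : ∑ t ∈ s.powerset, ‖f (insert a (s \ t)) - f (s \ t)‖^2
        = ∑ t ∈ s.powerset, ‖f t - g t‖^2 := by
      rw [sum_powerset_compl s (fun u => ‖f (insert a u) - f u‖^2)]
      exact Finset.sum_congr rfl fun t _ => by rw [norm_sub_rev]
    have hS4 : ∑ t ∈ s.powerset, ‖f (s \ t) - f t‖^2
        = ∑ t ∈ s.powerset, ‖f t - f (s \ t)‖^2 :=
      Finset.sum_congr rfl fun t _ => by rw [norm_sub_rev]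
    have hIHf := ih f
    have hIHg := ih g
    have hR : ∑ i ∈ insert a s, ∑ t ∈ (insert a s).powerset, ‖f t - f (t ∆ {i})‖^2
        = (∑ t ∈ s.powerset, ‖f t - g t‖^2 + ∑ t ∈ s.powerset, ‖f t - g t‖^2)
          + (∑ i ∈ s, ∑ t ∈ s.powerset, ‖f t - f (t ∆ {i})‖^2
             + ∑ i ∈ s, ∑ t ∈ s.powerset, ‖g t - g (t ∆ {i})‖^2) := by
      rw [Finset.sum_insert ha, hsplit]
      congr 1
      · congr 1
        · exact Finset.sum_congr rfl fun t ht => by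
            rw [symmDiff_insert_not_mem (hat t ht)]
        · exact Finset.sum_congr rfl fun t ht => by
            rw [insert_symmDiff_self (hat t ht), norm_sub_rev]
      · rw [← Finset.sum_add_distrib]
        exact Finset.sum_congr rfl fun i hi => by
          rw [hsplit]
          congr 1
          exact Finset.sum_congr rfl fun t ht => by
            rw [insert_symmDiff_single (show i ≠ a from fun h => ha (h ▸ hi))]
    rw [hL, hR]
    linarith [hstep, hS3, hS4, hIHf, hIHg]

lemma lp_cube_dist (p : ℝ) (hp1 : 1 ≤ p) (t u : Finset ℕ) :
    ‖(∑ i ∈ t, lp.single (ENNReal.ofReal p) i (1:ℝ))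
      - ∑ i ∈ u, lp.single (ENNReal.ofReal p) i (1:ℝ)‖
    = ((t ∆ u).card : ℝ) ^ (1/p) := by
  have hp : 0 < p := lt_of_lt_of_le one_pos hp1
  set P := ENNReal.ofReal p with hP
  haveI : Fact ((1:ENNReal) ≤ P) := ⟨by rw [hP]; exact ENNReal.one_le_ofReal.2 hp1⟩
  have hPtop : P.toReal = p := ENNReal.toReal_ofReal hp.le
  set g : ℕ → ℝ := fun i => if i ∈ t then (1:ℝ) else -1 with hgdef
  have hdisj : Disjoint (t \ u) (u \ t) := disjoint_sdiff_sdiff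
  have hrw : (∑ i ∈ t, lp.single P i (1:ℝ)) - ∑ i ∈ u, lp.single P i (1:ℝ)
      = ∑ i ∈ t ∆ u, lp.single P i (g i) := by
    have h1 : ∑ i ∈ t, lp.single P i (1:ℝ)
        = ∑ i ∈ t ∩ u, lp.single P i (1:ℝ) + ∑ i ∈ t \ u, lp.single P i (1:ℝ) :=
      (Finset.sum_inter_add_sum_sdiff t u _).symm
    have h2 : ∑ i ∈ u, lp.single P i (1:ℝ)
        = ∑ i ∈ t ∩ u, lp.single P i (1:ℝ) + ∑ i ∈ u \ t, lp.single P i (1:ℝ) := by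
      rw [Finset.inter_comm]
      exact (Finset.sum_inter_add_sum_sdiff u t _).symm
    have h3 : (t ∆ u : Finset ℕ) = (t \ u) ∪ (u \ t) := by
      rw [symmDiff_def, Finset.sup_eq_union]
    rw [h1, h2, h3, Finset.sum_union hdisj]
    have h4 : ∑ i ∈ t \ u, lp.single P i (g i) = ∑ i ∈ t \ u, lp.single P i (1:ℝ) :=
      Finset.sum_congr rfl fun i hi => by
        rw [hgdef]; simp [(Finset.mem_sdiff.1 hi).1]
    have h5 : ∑ i ∈ u \ t, lp.single P i (g i) = -∑ i ∈ u \ t, lp.single P i (1:ℝ) := by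
      rw [← Finset.sum_neg_distrib]
      refine Finset.sum_congr rfl fun i hi => ?_
      rw [hgdef]
      simp only [(Finset.mem_sdiff.1 hi).2, if_false]
      exact lp.single_neg (E := fun _ : ℕ => ℝ) P i (1:ℝ)
    rw [h4, h5]
    abel
  rw [hrw]
  have hnorm : ‖∑ i ∈ t ∆ u, lp.single P i (g i)‖ ^ p = ((t ∆ u).card : ℝ) := by
    have hmain := lp.norm_sum_single (E := fun _ : ℕ => ℝ) (p := P)
      (by rw [hPtop]; exact hp) g (t ∆ u)
    rw [hPtop] at hmain
    rw [hmain]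
    have hg1 : ∀ i ∈ t ∆ u, ‖g i‖ ^ p = 1 := by
      intro i _
      rw [hgdef]
      by_cases hi : i ∈ t
      · simp only [hi, if_true, norm_one]
        exact Real.one_rpow p
      · simp only [hi, if_false, norm_neg, norm_one]
        exact Real.one_rpow p
    rw [Finset.sum_congr rfl hg1, Finset.sum_const, nsmul_eq_mul, mul_one]
  have hnn : (0:ℝ) ≤ ‖∑ i ∈ t ∆ u, lp.single P i (g i)‖ := norm_nonneg _
  calc ‖∑ i ∈ t ∆ u, lp.single P i (g i)‖
      = (‖∑ i ∈ t ∆ u, lp.single P i (g i)‖ ^ p) ^ (1/p) := by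
        rw [← Real.rpow_mul hnn, mul_one_div_cancel hp.ne', Real.rpow_one]
    _ = ((t ∆ u).card : ℝ) ^ (1/p) := by rw [hnorm]


/-- For `1 ≤ p ≤ 2` and `0 < α ≤ 1`: if the `α`-snowflake of `ℓ_p` admits
a bi-Lipschitz embedding into a Hilbert space, i.e. there are a real Hilbert space `H`,
a map `T : ℓ_p → H`, and constants `A, B > 0` with
`A·‖x-y‖_p^α ≤ ‖T x - T y‖ ≤ B·‖x-y‖_p^α` for all `x, y ∈ ℓ_p`, then `α ≤ p/2`. -/
theorem lp_snowflake_embedding_exponent_upper_bound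
    (p α : ℝ) (hp1 : 1 ≤ p) (hp2 : p ≤ 2) (hα0 : 0 < α) (hα1 : α ≤ 1)
    (H : Type) [NormedAddCommGroup H] [InnerProductSpace ℝ H] [CompleteSpace H]
    (T : lp (fun _ : ℕ => ℝ) (ENNReal.ofReal p) → H)
    (A B : ℝ) (hA : 0 < A) (hB : 0 < B)
    (hT : ∀ x y : lp (fun _ : ℕ => ℝ) (ENNReal.ofReal p),
      A * ‖x - y‖ ^ α ≤ ‖T x - T y‖ ∧ ‖T x - T y‖ ≤ B * ‖x - y‖ ^ α) :
    α ≤ p / 2 := by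
  have hp : 0 < p := lt_of_lt_of_le one_pos hp1
  set x : Finset ℕ → lp (fun _ : ℕ => ℝ) (ENNReal.ofReal p) :=
    fun t => ∑ i ∈ t, lp.single (ENNReal.ofReal p) i (1:ℝ) with hx
  have hdist : ∀ t u : Finset ℕ, ‖x t - x u‖ = ((t ∆ u).card : ℝ) ^ (1/p) :=
    fun t u => lp_cube_dist p hp1 t u
  have key : ∀ n : ℕ, (2^n : ℝ) * (A * ((n:ℝ) ^ (1/p)) ^ α)^2 ≤ (n : ℝ) * ((2^n : ℝ) * B^2) := by
    intro n
    set s := Finset.range n with hs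
    set f : Finset ℕ → H := fun t => T (x t) with hf
    have henf := enflo_type_two s f
    have hlow : (2^n : ℝ) * (A * ((n:ℝ) ^ (1/p)) ^ α)^2
        ≤ ∑ t ∈ s.powerset, ‖f t - f (s \ t)‖^2 := by
      have hterm : ∀ t ∈ s.powerset, (A * ((n:ℝ) ^ (1/p)) ^ α)^2 ≤ ‖f t - f (s \ t)‖^2 := by
        intro t ht
        have hts : t ⊆ s := Finset.mem_powerset.1 ht
        have hd : ‖x t - x (s \ t)‖ = ((n:ℝ)) ^ (1/p) := by
          rw [hdist, symmDiff_sdiff_self hts, hs, Finset.card_range]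
        have h1 := (hT (x t) (x (s \ t))).1
        rw [hd] at h1
        have hnn : 0 ≤ A * ((n:ℝ) ^ (1/p)) ^ α := by positivity
        exact pow_le_pow_left₀ hnn h1 2
      calc (2^n : ℝ) * (A * ((n:ℝ) ^ (1/p)) ^ α)^2
          = ∑ _t ∈ s.powerset, (A * ((n:ℝ) ^ (1/p)) ^ α)^2 := by
            rw [Finset.sum_const, Finset.card_powerset, hs, Finset.card_range,
              nsmul_eq_mul]
            push_cast
            ring
        _ ≤ ∑ t ∈ s.powerset, ‖f t - f (s \ t)‖^2 := Finset.sum_le_sum hterm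
    have hup : ∑ i ∈ s, ∑ t ∈ s.powerset, ‖f t - f (t ∆ {i})‖^2
        ≤ (n : ℝ) * ((2^n : ℝ) * B^2) := by
      have hterm : ∀ i ∈ s, ∑ t ∈ s.powerset, ‖f t - f (t ∆ {i})‖^2 ≤ (2^n : ℝ) * B^2 := by
        intro i _
        have hterm2 : ∀ t ∈ s.powerset, ‖f t - f (t ∆ {i})‖^2 ≤ B^2 := by
          intro t _
          have hd : ‖x t - x (t ∆ {i})‖ = 1 := by
            rw [hdist, symmDiff_symmDiff_cancel_left, Finset.card_singleton]
            push_cast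
            exact Real.one_rpow _
          have h2 := (hT (x t) (x (t ∆ {i}))).2
          rw [hd, Real.one_rpow, mul_one] at h2
          exact pow_le_pow_left₀ (norm_nonneg _) h2 2
        calc ∑ t ∈ s.powerset, ‖f t - f (t ∆ {i})‖^2
            ≤ ∑ _t ∈ s.powerset, B^2 := Finset.sum_le_sum hterm2
          _ = (2^n : ℝ) * B^2 := by
              rw [Finset.sum_const, Finset.card_powerset, hs, Finset.card_range, nsmul_eq_mul]
              push_cast
              ring
      calc ∑ i ∈ s, ∑ t ∈ s.powerset, ‖f t - f (t ∆ {i})‖^2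
          ≤ ∑ _i ∈ s, (2^n : ℝ) * B^2 := Finset.sum_le_sum hterm
        _ = (n : ℝ) * ((2^n : ℝ) * B^2) := by
            rw [Finset.sum_const, hs, Finset.card_range, nsmul_eq_mul]
    linarith
  by_contra hcon
  push_neg at hcon
  set β : ℝ := (2*α - p)/p with hβdef
  have hβ : 0 < β := div_pos (by linarith) hp
  have key2 : ∀ n : ℕ, 1 ≤ n → ((n:ℝ)) ^ β ≤ B^2 / A^2 := by
    intro n hn
    have hr : (0:ℝ) < (n:ℝ) := by exact_mod_cast hn
    have h := key n
    have h2n : (0:ℝ) < 2^n := by positivity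
    have e1 : (((n:ℝ) ^ (1/p)) ^ α)^2 = (n:ℝ) ^ ((1/p)*α + (1/p)*α) := by
      rw [← Real.rpow_mul hr.le, pow_two, ← Real.rpow_add hr]
    have e2 : (1/p)*α + (1/p)*α = 1 + β := by
      rw [hβdef]
      field_simp
      ring
    have e3 : ((n:ℝ)) ^ ((1:ℝ) + β) = (n:ℝ) * (n:ℝ)^β := by
      rw [Real.rpow_add hr, Real.rpow_one]
    have hsq : (A * ((n:ℝ) ^ (1/p)) ^ α)^2 = A^2 * ((n:ℝ) * (n:ℝ)^β) := by
      rw [mul_pow, e1, e2, e3]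
    rw [hsq] at h
    have h3 : ((2:ℝ)^n * (n:ℝ)) * (A^2 * (n:ℝ)^β) ≤ ((2:ℝ)^n * (n:ℝ)) * B^2 := by nlinarith [h]
    have h4 : A^2 * (n:ℝ)^β ≤ B^2 :=
      le_of_mul_le_mul_left h3 (by positivity)
    rw [le_div_iff₀ (by positivity : (0:ℝ) < A^2)]
    linarith
  obtain ⟨N, hN⟩ := exists_nat_gt (max 1 ((B^2/A^2) ^ (1/β)))
  have hN1R : (1:ℝ) < (N:ℝ) := lt_of_le_of_lt (le_max_left _ _) hN
  have hN1 : 1 ≤ N := by exact_mod_cast hN1R.le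
  have hlt : (B^2/A^2) ^ (1/β) < (N:ℝ) := lt_of_le_of_lt (le_max_right _ _) hN
  have hfin : B^2/A^2 < (N:ℝ)^β := by
    have h0 : 0 ≤ (B^2/A^2) ^ (1/β) := Real.rpow_nonneg (by positivity) _
    calc B^2/A^2 = ((B^2/A^2) ^ (1/β))^β := by
          rw [← Real.rpow_mul (by positivity), one_div_mul_cancel hβ.ne', Real.rpow_one]
      _ < (N:ℝ)^β := Real.rpow_lt_rpow h0 hlt hβ
  linarith [key2 N hN1]
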